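/- Let {P₁,…,P_{m+1}} be an m-simplex in P(V), where V is a vector space over a division ring. Then there exist linearly independent vectors x₁ ∈ P₁,…,x_m ∈ P_m such that P_{m+1} = span(x₁+⋯+x_m). -/

import Mathlib

open Module Submodule Set

section aux
variable {K V : Type*} [DivisionRing K] [AddCommGroup V] [Module K V] [FiniteDimensional K V]

lemma lineA {Q : Submodule K V} (hQ : Module.finrank K Q = 1) {a : V}
    (ha : a ∈ Q) (ha0 : a ≠ 0) : Q = Submodule.span K {a} := by
  refine (Submodule.eq_of_le_of_finrank_le
    (Submodule.span_le.2 (Set.singleton_subset_iff.2 ha)) ?_).symm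
  rw [hQ]
  have : Module.finrank K (Submodule.span K {a}) = 1 := finrank_span_singleton ha0
  omega

lemma indep_transfer {ι : Type*} (Q : ι → Submodule K V)
    (hQ : ∀ i, Module.finrank K (Q i) = 1)
    {a b : ι → V} (ha : ∀ i, a i ∈ Q i ∧ a i ≠ 0) (hb : ∀ i, b i ∈ Q i ∧ b i ≠ 0)
    (h : LinearIndependent K a) : LinearIndependent K b := by
  have key : ∀ i, ∃ c : Kˣ, b i = (c : K) • a i := by
    intro i
    have hsp := lineA (hQ i) (ha i).1 (ha i).2
    have hmem := (hb i).1
    rw [hsp, Submodule.mem_span_singleton] at hmem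
    obtain ⟨c, hc⟩ := hmem
    have hc0 : c ≠ 0 := by rintro rfl; rw [zero_smul] at hc; exact (hb i).2 hc.symm
    exact ⟨Units.mk0 c hc0, hc.symm⟩
  choose c hc using key
  have h2 := h.units_smul c
  convert h2 using 1
  funext i
  simpa [Units.smul_def] using hc i

end aux


/-- A finite set of lines is *independent* if some choice of nonzero representative
vectors is linearly independent. -/
def IndepLines (K : Type*) {V : Type*} [DivisionRing K] [AddCommGroup V] [Module K V]
    (𝒳 : Set (Submodule K V)) : Prop :=
  ∃ x : 𝒳 → V, (∀ P : 𝒳, x P ∈ (P : Submodule K V) ∧ x P ≠ 0) ∧ LinearIndependent K x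

/-- An `(m+1)`-element subset of `P(V)` is an *`m`-simplex* if it is not independent
but every `m`-element subset of it is independent. -/
def IsSimplex (K : Type*) {V : Type*} [DivisionRing K] [AddCommGroup V] [Module K V]
    (m : ℕ) (𝒳 : Set (Submodule K V)) : Prop :=
  𝒳.Finite ∧ 𝒳.ncard = m + 1 ∧ (∀ P ∈ 𝒳, Module.finrank K P = 1) ∧
    ¬ IndepLines K 𝒳 ∧ ∀ 𝒴 ⊆ 𝒳, 𝒴.ncard = m → IndepLines K 𝒴

/-- If `{P 1, …, P (m+1)}` is an `m`-simplex in `P(V)`, then there are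
linearly independent vectors `x i ∈ P i` (`i ≤ m`) with
`P (m+1) = span (x 1 + ⋯ + x m)`. -/
theorem stmt7 {K V : Type*} [DivisionRing K] [AddCommGroup V] [Module K V]
    [FiniteDimensional K V] (hdim : 2 ≤ Module.finrank K V)
    {m : ℕ} (hm : 2 ≤ m) (hmn : m ≤ Module.finrank K V)
    (P : Fin (m + 1) → Submodule K V) (hinj : Function.Injective P)
    (hsimp : IsSimplex K m (Set.range P)) :
    ∃ x : Fin m → V, LinearIndependent K x ∧ (∀ i : Fin m, x i ∈ P i.castSucc) ∧
      P (Fin.last m) = Submodule.span K {∑ i, x i} := by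
  obtain ⟨hfin, hcard, hrank, hnind, hind⟩ := hsimp
  -- representative of the last line
  have hlast1 : Module.finrank K (P (Fin.last m)) = 1 := hrank _ ⟨_, rfl⟩
  have hlastbot : P (Fin.last m) ≠ ⊥ := by
    intro h; rw [h] at hlast1; simp [finrank_bot] at hlast1
  obtain ⟨v, hvmem, hv0⟩ := Submodule.exists_mem_ne_zero_of_ne_bot hlastbot
  -- an independent choice of representatives on the first m lines
  set 𝒴 : Set (Submodule K V) := Set.range (fun i : Fin m => P i.castSucc) with h𝒴
  have h𝒴sub : 𝒴 ⊆ Set.range P := by rintro _ ⟨i, rfl⟩; exact ⟨i.castSucc, rfl⟩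
  have hinjc : Function.Injective (fun i : Fin m => P i.castSucc) :=
    fun i j h => Fin.castSucc_injective m (hinj h)
  have h𝒴card : 𝒴.ncard = m := by
    rw [h𝒴, ← Set.image_univ, Set.ncard_image_of_injective _ hinjc, Set.ncard_univ]
    simp
  obtain ⟨xY, hxY, hxYli⟩ := hind 𝒴 h𝒴sub h𝒴card
  set e : Fin m → 𝒴 := fun i => ⟨P i.castSucc, ⟨i, rfl⟩⟩ with he
  have he_inj : Function.Injective e := fun i j h =>
    Fin.castSucc_injective m (hinj (congrArg Subtype.val h))
  set y : Fin m → V := fun i => xY (e i) with hy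
  have hyli : LinearIndependent K y := hxYli.comp e he_inj
  have hymem : ∀ i, y i ∈ P i.castSucc := fun i => (hxY (e i)).1
  have hy0 : ∀ i, y i ≠ 0 := fun i => (hxY (e i)).2
  -- the full family
  set w : Fin (m + 1) → V := Fin.snoc y v with hw
  have hwmem : ∀ i, w i ∈ P i := by
    intro i
    refine Fin.lastCases ?_ ?_ i
    · simpa [hw] using hvmem
    · intro j; simpa [hw] using hymem j
  have hw0 : ∀ i, w i ≠ 0 := by
    intro i
    refine Fin.lastCases ?_ ?_ i
    · simpa [hw] using hv0
    · intro j; simpa [hw] using hy0 j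
  set eqv : Fin (m + 1) ≃ Set.range P := Equiv.ofInjective P hinj with heqv
  have hPe : ∀ Q : Set.range P, P (eqv.symm Q) = (Q : Submodule K V) := by
    intro Q
    have := eqv.apply_symm_apply Q
    exact congrArg Subtype.val this
  -- v lies in the span of the y's
  have hvspan : v ∈ Submodule.span K (Set.range y) := by
    by_contra hvns
    have hwl : LinearIndependent K w := linearIndependent_fin_snoc.2 ⟨hyli, hvns⟩
    apply hnind
    refine ⟨w ∘ eqv.symm, fun Q => ⟨?_, hw0 _⟩, hwl.comp _ eqv.symm.injective⟩
    have := hwmem (eqv.symm Q)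
    rwa [hPe Q] at this
  rw [mem_span_range_iff_exists_fun] at hvspan
  obtain ⟨c, hc⟩ := hvspan
  -- every coefficient is nonzero
  have hcne : ∀ j, c j ≠ 0 := by
    intro j hcj
    set 𝒵 : Set (Submodule K V) := P '' {j.castSucc}ᶜ with h𝒵
    have h𝒵sub : 𝒵 ⊆ Set.range P := Set.image_subset_range _ _
    have h𝒵card : 𝒵.ncard = m := by
      rw [h𝒵, Set.ncard_image_of_injective _ hinj, Set.ncard_eq_toFinset_card']
      rw [Set.toFinset_compl, Finset.card_compl]
      simp
    obtain ⟨x', hx', hx'li⟩ := hind 𝒵 h𝒵sub h𝒵card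
    set emb : 𝒵 → Fin (m + 1) := fun Q => eqv.symm ⟨Q.1, h𝒵sub Q.2⟩ with hemb
    have hPemb : ∀ Q : 𝒵, P (emb Q) = (Q : Submodule K V) := fun Q =>
      hPe ⟨Q.1, h𝒵sub Q.2⟩
    have hembval : ∀ (Q : 𝒵) (i : Fin (m + 1)), (Q : Submodule K V) = P i → emb Q = i := by
      intro Q i hQi
      apply hinj
      rw [hPemb Q, hQi]
    have hemb_inj : Function.Injective emb := by
      intro Q₁ Q₂ h
      have : (Q₁ : Submodule K V) = Q₂ := by rw [← hPemb Q₁, ← hPemb Q₂, h]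
      exact Subtype.ext this
    set b : 𝒵 → V := w ∘ emb with hb
    have hbmem : ∀ Q : 𝒵, b Q ∈ (Q : Submodule K V) ∧ b Q ≠ 0 := by
      intro Q
      refine ⟨?_, hw0 _⟩
      have := hwmem (emb Q)
      rwa [hPemb Q] at this
    have hbli : LinearIndependent K b :=
      indep_transfer (fun Q : 𝒵 => (Q : Submodule K V))
        (fun Q => hrank _ (h𝒵sub Q.2)) hx' hbmem hx'li
    -- but b is dependent: v = b Q₀ is in the span of the others
    have hlastne : Fin.last m ∈ ({j.castSucc}ᶜ : Set (Fin (m + 1))) := by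
      simp [(Fin.castSucc_lt_last j).ne']
    set Q₀ : 𝒵 := ⟨P (Fin.last m), ⟨Fin.last m, hlastne, rfl⟩⟩ with hQ₀
    have hembQ₀ : emb Q₀ = Fin.last m := hembval Q₀ _ rfl
    have hbQ₀ : b Q₀ = v := by rw [hb]; simp [Function.comp, hembQ₀, hw]
    have hnotmem := hbli.notMem_span_image (s := ({Q₀}ᶜ : Set 𝒵))
      (x := Q₀) (by simp)
    apply hnotmem
    rw [hbQ₀, ← hc]
    refine Submodule.sum_mem _ ?_
    intro i _
    by_cases hij : i = j
    · subst hij; rw [hcj, zero_smul]; exact Submodule.zero_mem _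
    · refine Submodule.smul_mem _ _ (Submodule.subset_span ?_)
      have hine : i.castSucc ≠ j.castSucc := fun h => hij (Fin.castSucc_injective m h)
      set Qi : 𝒵 := ⟨P i.castSucc, ⟨i.castSucc, hine, rfl⟩⟩ with hQi
      have hembQi : emb Qi = i.castSucc := hembval Qi _ rfl
      have hbQi : b Qi = y i := by rw [hb]; simp [Function.comp, hembQi, hw]
      refine ⟨Qi, ?_, hbQi⟩
      simp only [Set.mem_compl_iff, Set.mem_singleton_iff]
      intro h
      have : P i.castSucc = P (Fin.last m) := congrArg Subtype.val h
      exact (Fin.castSucc_lt_last i).ne (hinj this)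
  -- conclusion
  refine ⟨fun i => c i • y i, ?_, fun i => Submodule.smul_mem _ _ (hymem i), ?_⟩
  · have h2 := hyli.units_smul (fun i => Units.mk0 (c i) (hcne i))
    convert h2 using 1
    funext i; simp [Units.smul_def]
  · have hsum : ∑ i, c i • y i = v := hc
    rw [hsum]
    exact lineA hlast1 hvmem hv0
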